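/- Assume the continuum hypothesis. Then there exist uncountable disjoint sets X, Y ⊆ 2^ω (the Cantor space of subsets of ℕ) such that: (1) X is Borel concentrated on Y, i.e., for every Borel set B ⊆ 2^ω, if Y ⊆ B then X \ B is countable; (2) Y² \ Δ is relatively F_σ in X² ∪ Y², i.e., there is an F_σ subset F of 2^ω × 2^ω with F ∩ (X² ∪ Y²) = Y² \ Δ; and (3) X² \ Δ is relatively F_σ in X² ∪ Y², i.e., there is an F_σ subset H of 2^ω × 2^ω with H ∩ (X² ∪ Y²) = X² \ Δ. Here Δ = {(x,x) : x ∈ 2^ω} is the diagonal. -/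

import Mathlib

open MeasureTheory

/-- A set is `F_σ` if it is a countable union of closed sets. -/
def IsFsigma {Z : Type*} [TopologicalSpace Z] (S : Set Z) : Prop :=
  ∃ C : ℕ → Set Z, (∀ n, IsClosed (C n)) ∧ S = ⋃ n, C n

namespace Stmt2

noncomputable section

open Set MeasureTheory

open scoped Cardinal

open scoped Classical

abbrev Pt : Type := ℕ → Bool

def PS (a : Pt) : Set ℕ := {n | a n = true}

def iS (a b : Pt) : Set ℕ := {n | a n = true ∧ b n = true}

lemma iS_comm (a b : Pt) : iS a b = iS b a := by
  ext n; exact and_comm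

lemma iS_self (a : Pt) : iS a a = PS a := by
  ext n; simp [iS, PS]

/-- countable union of closed sets over a countable index is Fσ -/
lemma isFsigma_iUnion {Z : Type*} [TopologicalSpace Z] {ι : Type*} [Countable ι]
    (C : ι → Set Z) (hC : ∀ i, IsClosed (C i)) : IsFsigma (⋃ i, C i) := by
  rcases isEmpty_or_nonempty ι with h | h
  · exact ⟨fun _ => ∅, fun _ => isClosed_empty, by simp⟩
  · obtain ⟨f, hf⟩ := exists_surjective_nat ι
    refine ⟨fun n => C (f n), fun n => hC _, ?_⟩
    apply le_antisymm
    · exact Set.iUnion_mono' fun i => ⟨(hf i).choose, by rw [(hf i).choose_spec]⟩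
    · exact Set.iUnion_mono' fun n => ⟨f n, le_rfl⟩

lemma isClopen_coord_fst (k : ℕ) (b : Bool) : IsClopen {p : Pt × Pt | p.1 k = b} :=
  (isClopen_discrete {b}).preimage ((continuous_apply k).comp continuous_fst)

lemma isClopen_coord_snd (k : ℕ) (b : Bool) : IsClopen {p : Pt × Pt | p.2 k = b} :=
  (isClopen_discrete {b}).preimage ((continuous_apply k).comp continuous_snd)

/-- the closed pieces of our Fσ sets -/
def piece (par : ℕ) (i : Σ N : ℕ, (Fin N → Bool) × (Fin N → Bool)) : Set (Pt × Pt) :=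
  if (∃ k, i.2.1 k ≠ i.2.2 k) ∧
      (Finset.univ.filter (fun k : Fin i.1 => i.2.1 k = true ∧ i.2.2 k = true)).card % 2 = par then
    {p | (∀ k, i.1 ≤ k → ¬(p.1 k = true ∧ p.2 k = true)) ∧
         (∀ k : Fin i.1, p.1 (k : ℕ) = i.2.1 k ∧ p.2 (k : ℕ) = i.2.2 k)}
  else ∅

lemma isClosed_piece (par : ℕ) (i : Σ N : ℕ, (Fin N → Bool) × (Fin N → Bool)) :
    IsClosed (piece par i) := by
  rw [piece]
  split_ifs with h
  · have h1 : ∀ k : ℕ, IsClosed {p : Pt × Pt | i.1 ≤ k → ¬(p.1 k = true ∧ p.2 k = true)} := by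
      intro k
      by_cases hk : i.1 ≤ k
      · have : {p : Pt × Pt | i.1 ≤ k → ¬(p.1 k = true ∧ p.2 k = true)} =
            ({p : Pt × Pt | p.1 k = true} ∩ {p : Pt × Pt | p.2 k = true})ᶜ := by
          ext p; simp [hk]
        rw [this]
        exact (((isClopen_coord_fst k true).isOpen).inter
          ((isClopen_coord_snd k true).isOpen)).isClosed_compl
      · have : {p : Pt × Pt | i.1 ≤ k → ¬(p.1 k = true ∧ p.2 k = true)} = univ := by
          ext p; simp [hk]
        rw [this]; exact isClosed_univ
    have h2 : ∀ k : Fin i.1, IsClosed {p : Pt × Pt | p.1 (k : ℕ) = i.2.1 k ∧ p.2 (k : ℕ) = i.2.2 k} := by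
      intro k
      exact ((isClopen_coord_fst _ _).isClosed).inter ((isClopen_coord_snd _ _).isClosed)
    have : {p : Pt × Pt | (∀ k, i.1 ≤ k → ¬(p.1 k = true ∧ p.2 k = true)) ∧
         (∀ k : Fin i.1, p.1 (k : ℕ) = i.2.1 k ∧ p.2 (k : ℕ) = i.2.2 k)} =
        (⋂ k : ℕ, {p : Pt × Pt | i.1 ≤ k → ¬(p.1 k = true ∧ p.2 k = true)}) ∩
        (⋂ k : Fin i.1, {p : Pt × Pt | p.1 (k : ℕ) = i.2.1 k ∧ p.2 (k : ℕ) = i.2.2 k}) := by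
      ext p; simp only [Set.mem_setOf_eq, Set.mem_inter_iff, Set.mem_iInter]
    rw [this]
    exact (isClosed_iInter h1).inter (isClosed_iInter h2)
  · exact isClosed_empty

def FH (par : ℕ) : Set (Pt × Pt) := ⋃ i, piece par i

lemma isFsigma_FH (par : ℕ) : IsFsigma (FH par) :=
  isFsigma_iUnion _ (isClosed_piece par)

/-- counting within a bound -/
lemma ncard_filter_of_bound {a b : Pt} {N : ℕ} (h : ∀ x ∈ iS a b, x < N) :
    (iS a b).ncard
      = (Finset.univ.filter (fun k : Fin N => a (k : ℕ) = true ∧ b (k : ℕ) = true)).card := by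
  classical
  have h0 : iS a b = ↑((Finset.range N).filter (fun m => a m = true ∧ b m = true)) := by
    ext x
    simp only [Finset.coe_filter, Finset.mem_range, Set.mem_setOf_eq]
    constructor
    · intro hx; exact ⟨h x hx, hx⟩
    · intro hx; exact hx.2
  rw [h0, Set.ncard_coe_finset]
  rw [Finset.card_filter, Finset.card_filter]
  exact (Fin.sum_univ_eq_sum_range (fun m => if a m = true ∧ b m = true then 1 else 0) N).symm

lemma iS_finite_of_bound {a b : Pt} {N : ℕ} (h : ∀ k, N ≤ k → ¬(a k = true ∧ b k = true)) :
    (∀ x ∈ iS a b, x < N) ∧ (iS a b).Finite := by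
  have hb : ∀ x ∈ iS a b, x < N := by
    intro x hx
    by_contra hc
    exact h x (le_of_not_gt hc) hx
  exact ⟨hb, (Set.finite_Iio N).subset fun x hx => hb x hx⟩

/-- membership characterization of `FH par` -/
lemma mem_FH {par : ℕ} {a b : Pt} :
    (a, b) ∈ FH par ↔ a ≠ b ∧ (iS a b).Finite ∧ (iS a b).ncard % 2 = par := by
  constructor
  · rintro ⟨s, ⟨i, rfl⟩, hmem⟩
    simp only [piece] at hmem
    split_ifs at hmem with hcond
    · obtain ⟨htail, hpre⟩ := hmem
      have hpre' : ∀ k : Fin i.1, a (k : ℕ) = i.2.1 k ∧ b (k : ℕ) = i.2.2 k := hpre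
      obtain ⟨hb, hfin⟩ := iS_finite_of_bound htail
      obtain ⟨k0, hk0⟩ := hcond.1
      refine ⟨?_, hfin, ?_⟩
      · intro hab
        apply hk0
        rw [← (hpre' k0).1, ← (hpre' k0).2, hab]
      · rw [ncard_filter_of_bound hb]
        have : (Finset.univ.filter (fun k : Fin i.1 => a (k : ℕ) = true ∧ b (k : ℕ) = true))
            = (Finset.univ.filter (fun k : Fin i.1 => i.2.1 k = true ∧ i.2.2 k = true)) := by
          apply Finset.filter_congr
          intro k _
          rw [(hpre' k).1, (hpre' k).2]
        rw [this]
        exact hcond.2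
    · exact absurd hmem (Set.notMem_empty _)
  · rintro ⟨hne, hfin, hpar⟩
    obtain ⟨m, hm⟩ := hfin.bddAbove
    obtain ⟨k0, hk0⟩ := Function.ne_iff.mp hne
    set N := max (m + 1) (k0 + 1) with hN
    have hbnd : ∀ x ∈ iS a b, x < N := by
      intro x hx
      exact lt_of_le_of_lt (hm hx) (lt_of_lt_of_le (Nat.lt_succ_self m) (le_max_left _ _))
    refine ⟨piece par ⟨N, fun k => a (k : ℕ), fun k => b (k : ℕ)⟩, ⟨_, rfl⟩, ?_⟩
    rw [piece]
    have hcond : (∃ k : Fin N, a (k : ℕ) ≠ b (k : ℕ)) ∧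
        (Finset.univ.filter (fun k : Fin N => a (k : ℕ) = true ∧ b (k : ℕ) = true)).card % 2
          = par := by
      constructor
      · exact ⟨⟨k0, lt_of_lt_of_le (Nat.lt_succ_self k0) (le_max_right _ _)⟩, hk0⟩
      · rw [← ncard_filter_of_bound hbnd]; exact hpar
    rw [if_pos hcond]
    refine ⟨?_, fun k => ⟨rfl, rfl⟩⟩
    intro k hk hcontra
    exact absurd (hbnd k hcontra) (not_lt.mpr hk)


def Ib (n : ℕ) : Set ℕ := {m | (Nat.unpair m).1 = n}

lemma Ib_infinite (n : ℕ) : (Ib n).Infinite := by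
  apply Set.infinite_of_injective_forall_mem (f := fun k => Nat.pair n k)
  · intro k k' h
    have := congrArg (fun m => (Nat.unpair m).2) h
    simpa [Nat.unpair_pair] using this
  · intro k
    simp [Ib, Nat.unpair_pair]

def t0 : Pt := fun m => decide ((Nat.unpair m).2 = 0)

structure Tg where
  pt : Pt
  tg : Bool

def tgtPar (b : Bool) : ℕ := if b then 0 else 1

lemma tgtPar_lt_two (b : Bool) : tgtPar b < 2 := by
  cases b <;> simp [tgtPar]

def parOK (z : Pt) (p : Tg) : Prop :=
  (iS z p.pt).Finite ∧ (iS z p.pt).ncard % 2 = tgtPar p.tg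

def ptInv (a : Pt) : Prop := (PS a).Infinite ∧ ∀ n, (PS a ∩ Ib n).Finite

lemma ptInv_t0 : ptInv t0 := by
  constructor
  · apply Set.infinite_of_injective_forall_mem (f := fun k => Nat.pair k 0)
    · intro k k' h
      have := congrArg (fun m => (Nat.unpair m).1) h
      simpa [Nat.unpair_pair] using this
    · intro k
      simp [PS, t0, Nat.unpair_pair]
  · intro n
    apply Set.Finite.subset (Set.finite_singleton (Nat.pair n 0))
    intro m hm
    obtain ⟨h1, h2⟩ := hm
    simp only [PS, t0, mem_setOf_eq, decide_eq_true_eq] at h1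
    simp only [Ib, mem_setOf_eq] at h2
    have := Nat.pair_unpair m
    rw [h2, h1] at this
    simp [← this]

def Cand (S : Set Tg) (z : Pt) : Prop := ptInv z ∧ ∀ p ∈ S, parOK z p

lemma Cand.mono {S S' : Set Tg} (h : S ⊆ S') {z : Pt} (hz : Cand S' z) : Cand S z :=
  ⟨hz.1, fun p hp => hz.2 p (h hp)⟩

/-! ## The ω-step construction -/

def pick (A : Set ℕ) : ℕ := if h : A.Nonempty then h.choose else 0

lemma pick_mem {A : Set ℕ} (h : A.Nonempty) : pick A ∈ A := by
  rw [pick, dif_pos h]; exact h.choose_spec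

section Omega

variable (q : ℕ → Tg)

def Av (k : ℕ) : Set ℕ := {m | (∃ j, j < k ∧ (q j).pt m = true) ∨ (Nat.unpair m).1 < k}

def cnt (k : ℕ) (E : Finset ℕ) : ℕ := (E.filter (fun m => (q k).pt m = true)).card

def needA (k : ℕ) (E : Finset ℕ) : Prop :=
  (∀ j, j < k → q j ≠ q k) ∧ ¬(cnt q k E % 2 = tgtPar (q k).tg)

def Aset (k : ℕ) (E : Finset ℕ) : Set ℕ := PS (q k).pt \ (Av q k ∪ ↑E)

def Bset (k : ℕ) (E : Finset ℕ) : Set ℕ :=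
  Ib k \ ({m | ∃ j, j ≤ k ∧ (q j).pt m = true} ∪ ↑E)

def DD : ℕ → Finset ℕ
  | 0 => ∅
  | k + 1 =>
    (DD k ∪ (if needA q k (DD k) then {pick (Aset q k (DD k))} else ∅)) ∪
      {pick (Bset q k ((DD k ∪ (if needA q k (DD k) then {pick (Aset q k (DD k))} else ∅))))}

def E1 (k : ℕ) : Finset ℕ :=
  DD q k ∪ (if needA q k (DD q k) then {pick (Aset q k (DD q k))} else ∅)

def bE (k : ℕ) : ℕ := pick (Bset q k (E1 q k))

lemma DD_succ (k : ℕ) : DD q (k + 1) = E1 q k ∪ {bE q k} := rfl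

variable (hq1 : ∀ k, ptInv (q k).pt)
variable (hq2 : ∀ j k, q j ≠ q k → (iS (q j).pt (q k).pt).Finite)

include hq1 hq2

lemma Aset_nonempty (k : ℕ) (E : Finset ℕ) (hf : ∀ j, j < k → q j ≠ q k) :
    (Aset q k E).Nonempty := by
  have hfin : (PS (q k).pt ∩ (Av q k ∪ ↑E)).Finite := by
    have hsub : PS (q k).pt ∩ (Av q k ∪ ↑E) ⊆
        ((⋃ j ∈ Set.Iio k, iS (q k).pt (q j).pt) ∪ (⋃ n ∈ Set.Iio k, PS (q k).pt ∩ Ib n)) ∪ ↑E := by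
      rintro m ⟨hm, hmem⟩
      rcases hmem with hav | he
      · rcases hav with ⟨j, hj, hpj⟩ | hun
        · exact Or.inl (Or.inl (Set.mem_biUnion hj ⟨hm, hpj⟩))
        · exact Or.inl (Or.inr (Set.mem_biUnion hun ⟨hm, rfl⟩))
      · exact Or.inr he
    apply Set.Finite.subset _ hsub
    apply Set.Finite.union
    apply Set.Finite.union
    · exact Set.Finite.biUnion (Set.finite_Iio k)
        (fun j hj => hq2 k j (fun h => (hf j hj) h.symm))
    · exact Set.Finite.biUnion (Set.finite_Iio k) (fun n _ => (hq1 k).2 n)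
    · exact Finset.finite_toSet E
  have : (PS (q k).pt \ (PS (q k).pt ∩ (Av q k ∪ ↑E))).Infinite :=
    Set.Infinite.diff (hq1 k).1 hfin
  apply Set.Infinite.nonempty
  apply Set.Infinite.mono _ this
  rintro m ⟨hm, hnot⟩
  exact ⟨hm, fun hc => hnot ⟨hm, hc⟩⟩

omit hq2 in
lemma Bset_nonempty (k : ℕ) (E : Finset ℕ) : (Bset q k E).Nonempty := by
  have hfin : (Ib k ∩ ({m | ∃ j, j ≤ k ∧ (q j).pt m = true} ∪ ↑E)).Finite := by
    have hsub : Ib k ∩ ({m | ∃ j, j ≤ k ∧ (q j).pt m = true} ∪ ↑E) ⊆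
        (⋃ j ∈ Set.Iic k, PS (q j).pt ∩ Ib k) ∪ ↑E := by
      rintro m ⟨hm, hmem⟩
      rcases hmem with ⟨j, hj, hpj⟩ | he
      · exact Or.inl (Set.mem_biUnion hj ⟨hpj, hm⟩)
      · exact Or.inr he
    apply Set.Finite.subset _ hsub
    exact (Set.Finite.biUnion (Set.finite_Iic k) (fun j _ => (hq1 j).2 k)).union
      (Finset.finite_toSet E)
  have : (Ib k \ (Ib k ∩ ({m | ∃ j, j ≤ k ∧ (q j).pt m = true} ∪ ↑E))).Infinite :=
    Set.Infinite.diff (Ib_infinite k) hfin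
  apply Set.Infinite.nonempty
  apply Set.Infinite.mono _ this
  rintro m ⟨hm, hnot⟩
  exact ⟨hm, fun hc => hnot ⟨hm, hc⟩⟩

omit hq2 in
lemma bE_mem (k : ℕ) : bE q k ∈ Bset q k (E1 q k) :=
  pick_mem (Bset_nonempty q hq1 k _)

omit hq1 hq2 in
lemma DD_le_succ (k : ℕ) : DD q k ⊆ DD q (k + 1) := by
  rw [DD_succ]
  intro m hm
  exact Finset.mem_union_left _ (Finset.mem_union_left _ hm)

omit hq1 hq2 in
lemma DD_mono {k l : ℕ} (h : k ≤ l) : DD q k ⊆ DD q l := by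
  induction l, h using Nat.le_induction with
  | base => exact Finset.Subset.refl _
  | succ l _ ih => exact ih.trans (DD_le_succ q l)

def zz : Pt := fun m => if ∃ k, m ∈ DD q k then true else false

omit hq1 hq2 in
lemma mem_PS_zz {m : ℕ} : m ∈ PS (zz q) ↔ ∃ k, m ∈ DD q k := by
  by_cases h : ∃ k, m ∈ DD q k <;> simp [PS, zz, h]

lemma confine_pt (n : ℕ) : ∀ l, ∀ m ∈ DD q l, (q n).pt m = true → m ∈ DD q (n + 1) := by
  intro l
  induction l with
  | zero => intro m hm; simp [DD] at hm
  | succ l ih =>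
    intro m hm hpt
    rw [DD_succ] at hm
    rcases Finset.mem_union.mp hm with hm' | hm'
    · rw [E1] at hm'
      rcases Finset.mem_union.mp hm' with hm'' | hm''
      · exact ih m hm'' hpt
      · rcases le_or_gt l n with hln | hln
        · have hmE : m ∈ E1 q l := by rw [E1]; exact Finset.mem_union_right _ hm''
          refine DD_mono q (Nat.succ_le_succ hln) ?_
          rw [DD_succ]
          exact Finset.mem_union_left _ hmE
        · by_cases hA : needA q l (DD q l)
          · rw [if_pos hA] at hm''
            have hmem := pick_mem (Aset_nonempty q hq1 hq2 l (DD q l) hA.1)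
            rw [← Finset.mem_singleton.mp hm''] at hmem
            have hAv : m ∈ Av q l := Or.inl ⟨n, hln, hpt⟩
            exact absurd (Set.mem_union_left _ hAv) hmem.2
          · rw [if_neg hA] at hm''
            simp at hm''
    · have hb := bE_mem q hq1 l
      have hmb : m = bE q l := Finset.mem_singleton.mp hm'
      rcases le_or_gt l n with hln | hln
      · refine DD_mono q (Nat.succ_le_succ hln) ?_
        rw [DD_succ]
        exact Finset.mem_union_right _ hm'
      · rw [hmb] at hpt
        have : bE q l ∈ {m | ∃ j, j ≤ l ∧ (q j).pt m = true} ∪ ↑(E1 q l) :=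
          Set.mem_union_left _ ⟨n, Nat.le_of_lt hln, hpt⟩
        exact absurd this hb.2

lemma confine_Ib (n : ℕ) : ∀ l, ∀ m ∈ DD q l, m ∈ Ib n → (m ∈ DD q (n + 1) ∨ m = bE q n) := by
  intro l
  induction l with
  | zero => intro m hm; simp [DD] at hm
  | succ l ih =>
    intro m hm hIb
    rw [DD_succ] at hm
    rcases Finset.mem_union.mp hm with hm' | hm'
    · rw [E1] at hm'
      rcases Finset.mem_union.mp hm' with hm'' | hm''
      · exact ih m hm'' hIb
      · rcases le_or_gt l n with hln | hln
        · have hmE : m ∈ E1 q l := by rw [E1]; exact Finset.mem_union_right _ hm''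
          left
          refine DD_mono q (Nat.succ_le_succ hln) ?_
          rw [DD_succ]
          exact Finset.mem_union_left _ hmE
        · by_cases hA : needA q l (DD q l)
          · rw [if_pos hA] at hm''
            have hmem := pick_mem (Aset_nonempty q hq1 hq2 l (DD q l) hA.1)
            rw [← Finset.mem_singleton.mp hm''] at hmem
            have hun : (Nat.unpair m).1 < l := by
              rw [show (Nat.unpair m).1 = n from hIb]; exact hln
            have hAv : m ∈ Av q l := Or.inr hun
            exact absurd (Set.mem_union_left _ hAv) hmem.2
          · rw [if_neg hA] at hm''
            simp at hm''
    · have hb := bE_mem q hq1 l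
      have hmb : m = bE q l := Finset.mem_singleton.mp hm'
      rcases Nat.lt_or_ge l n with hln | hln
      · left
        refine DD_mono q (Nat.succ_le_succ (Nat.le_of_lt hln)) ?_
        rw [DD_succ]
        exact Finset.mem_union_right _ hm'
      · rcases Nat.eq_or_lt_of_le hln with heq | hlt
        · right; rw [hmb, heq]
        · exfalso
          have h1 : (Nat.unpair m).1 = l := by rw [hmb]; exact hb.1
          have h2 : (Nat.unpair m).1 = n := hIb
          omega

omit hq1 hq2 in
lemma bE_in_DD (k : ℕ) : bE q k ∈ DD q (k + 1) := by
  rw [DD_succ]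
  exact Finset.mem_union_right _ (Finset.mem_singleton_self _)

lemma iS_zz (k : ℕ) :
    iS (zz q) (q k).pt = ↑((DD q (k + 1)).filter (fun m => (q k).pt m = true)) := by
  ext m
  simp only [iS, Set.mem_setOf_eq, Finset.coe_filter, Finset.mem_coe]
  constructor
  · rintro ⟨hz, hpt⟩
    obtain ⟨l, hl⟩ := (mem_PS_zz q (m := m)).mp hz
    exact ⟨confine_pt q hq1 hq2 k l m hl hpt, hpt⟩
  · rintro ⟨hmem, hpt⟩
    refine ⟨?_, hpt⟩
    exact (mem_PS_zz q).mpr ⟨k + 1, hmem⟩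

omit hq2 in
lemma bE_not_pt (k : ℕ) : ¬((q k).pt (bE q k) = true) := by
  intro hc
  exact (bE_mem q hq1 k).2 (Or.inl ⟨k, le_refl k, hc⟩)

lemma parOK_zz (k : ℕ) : parOK (zz q) (q k) := by
  induction k using Nat.strong_induction_on with
  | _ k IH =>
    by_cases hf : ∀ j, j < k → q j ≠ q k
    · have hfin : (iS (zz q) (q k).pt).Finite := by
        rw [iS_zz q hq1 hq2]
        exact Finset.finite_toSet _
      refine ⟨hfin, ?_⟩
      have hcard : (iS (zz q) (q k).pt).ncard = cnt q k (DD q (k + 1)) := by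
        rw [iS_zz q hq1 hq2, Set.ncard_coe_finset]
        rfl
      rw [hcard]
      have hstep : cnt q k (DD q (k + 1)) = cnt q k (E1 q k) := by
        rw [DD_succ, cnt, cnt, Finset.filter_union, Finset.filter_singleton,
          if_neg (bE_not_pt q hq1 k)]
        simp
      rw [hstep]
      by_cases hA : needA q k (DD q k)
      · have ha := pick_mem (Aset_nonempty q hq1 hq2 k (DD q k) hA.1)
        set a := pick (Aset q k (DD q k)) with hadef
        have hE1 : E1 q k = DD q k ∪ {a} := by rw [E1, if_pos hA]
        have hanotin : a ∉ DD q k := fun hc => ha.2 (Or.inr hc)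
        have hapt : (q k).pt a = true := ha.1
        have : cnt q k (E1 q k) = cnt q k (DD q k) + 1 := by
          rw [hE1, cnt, cnt, Finset.filter_union, Finset.filter_singleton, if_pos hapt]
          rw [Finset.union_comm, ← Finset.insert_eq]
          rw [Finset.card_insert_of_notMem (fun hc => hanotin (Finset.mem_of_mem_filter a hc))]
        rw [this]
        have h2 := hA.2
        have h3 := tgtPar_lt_two (q k).tg
        omega
      · have : ¬¬(cnt q k (DD q k) % 2 = tgtPar (q k).tg) := fun hc => hA ⟨hf, hc⟩
        push_neg at this
        have hE1 : E1 q k = DD q k := by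
          rw [E1, if_neg hA, Finset.union_empty]
        rw [hE1]
        exact this
    · push_neg at hf
      obtain ⟨j, hj, hqj⟩ := hf
      rw [← hqj]
      exact IH j hj

lemma ptInv_zz : ptInv (zz q) := by
  constructor
  · apply Set.infinite_of_injective_forall_mem (f := fun k => bE q k)
    · intro k k' h
      have h' : bE q k = bE q k' := h
      have h1 := (bE_mem q hq1 k).1
      have h2 := (bE_mem q hq1 k').1
      rw [Ib, Set.mem_setOf_eq] at h1 h2
      rw [h'] at h1
      rw [h1] at h2
      exact h2
    · intro k
      exact (mem_PS_zz q).mpr ⟨k + 1, bE_in_DD q k⟩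
  · intro n
    apply Set.Finite.subset (((DD q (n + 1)).finite_toSet).union (Set.finite_singleton (bE q n)))
    rintro m ⟨hz, hIb⟩
    obtain ⟨l, hl⟩ := (mem_PS_zz q (m := m)).mp hz
    rcases confine_Ib q hq1 hq2 n l m hl hIb with h | h
    · exact Or.inl h
    · exact Or.inr h

theorem exists_parOK : ∃ z, ptInv z ∧ ∀ k, parOK z (q k) :=
  ⟨zz q, ptInv_zz q hq1 hq2, fun k => parOK_zz q hq1 hq2 k⟩

end Omega

theorem cand_exists (S : Set Tg) (hc : S.Countable)
    (h1 : ∀ p ∈ S, ptInv p.pt)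
    (h2 : ∀ p ∈ S, ∀ r ∈ S, p ≠ r → (iS p.pt r.pt).Finite) :
    ∃ z, Cand S z := by
  rcases S.eq_empty_or_nonempty with hS | hS
  · obtain ⟨z, hz1, _⟩ := exists_parOK (fun _ => ⟨t0, true⟩) (fun _ => ptInv_t0)
      (fun j k h => absurd rfl h)
    exact ⟨z, hz1, by simp [hS]⟩
  · obtain ⟨f, hf⟩ := hc.exists_eq_range hS
    obtain ⟨z, hz1, hz2⟩ := exists_parOK f
      (fun k => h1 _ (hf ▸ Set.mem_range_self k))
      (fun j k h => h2 _ (hf ▸ Set.mem_range_self j) _ (hf ▸ Set.mem_range_self k) h)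
    refine ⟨z, hz1, ?_⟩
    intro p hp
    rw [hf] at hp
    obtain ⟨k, rfl⟩ := hp
    exact hz2 k

/-! ## The transfinite construction -/

abbrev W : Type := (Cardinal.aleph 1).ord.ToType

lemma Iio_countable (w : W) : (Set.Iio w).Countable :=
  (Cardinal.countable_iff_lt_aleph_one _).mpr (Cardinal.mk_Iio_ord_toType w)

section Rec

variable (Bor : W → Set Pt)

def step (w : W) (rec : ∀ v, v < w → Pt × Pt) : Pt × Pt :=
  let S : Set Tg := {p | ∃ v, ∃ h : v < w, p = ⟨(rec v h).2, true⟩ ∨ p = ⟨(rec v h).1, false⟩}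
  let y : Pt := if h : ∃ z, Cand S z ∧ z ∉ Bor w then h.choose
    else if h' : ∃ z, Cand S z then h'.choose else t0
  let x : Pt := if h : ∃ z, Cand (insert ⟨y, true⟩ S) z then h.choose else t0
  (x, y)

def ff : W → Pt × Pt :=
  (IsWellFounded.wf (r := ((· < ·) : W → W → Prop))).fix (step Bor)

def xp (w : W) : Pt := (ff Bor w).1

def yp (w : W) : Pt := (ff Bor w).2

def Sset (w : W) : Set Tg :=
  {p | ∃ v, ∃ _ : v < w, p = ⟨yp Bor v, true⟩ ∨ p = ⟨xp Bor v, false⟩}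

lemma ff_eq (w : W) : ff Bor w = step Bor w (fun v _ => ff Bor v) :=
  WellFounded.fix_eq _ _ _

lemma yp_eq (w : W) : yp Bor w =
    (if h : ∃ z, Cand (Sset Bor w) z ∧ z ∉ Bor w then h.choose
     else if h' : ∃ z, Cand (Sset Bor w) z then h'.choose else t0) := by
  rw [yp, ff_eq]
  rfl

lemma xp_eq (w : W) : xp Bor w =
    (if h : ∃ z, Cand (insert ⟨yp Bor w, true⟩ (Sset Bor w)) z then h.choose else t0) := by
  rw [xp, ff_eq, yp, ff_eq]
  rfl

lemma Sset_mono {v w : W} (h : v ≤ w) : Sset Bor v ⊆ Sset Bor w := by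
  rintro p ⟨u, hu, hp⟩
  exact ⟨u, lt_of_lt_of_le hu h, hp⟩

lemma Sset_countable (w : W) : (Sset Bor w).Countable := by
  have hsub : Sset Bor w ⊆
      ((fun v => (⟨yp Bor v, true⟩ : Tg)) '' Set.Iio w) ∪
        ((fun v => (⟨xp Bor v, false⟩ : Tg)) '' Set.Iio w) := by
    rintro p ⟨u, hu, hp | hp⟩
    · exact Or.inl ⟨u, hu, hp.symm⟩
    · exact Or.inr ⟨u, hu, hp.symm⟩
  exact Set.Countable.mono hsub
    (((Iio_countable w).image _).union ((Iio_countable w).image _))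

def GOOD (w : W) : Prop :=
  Cand (Sset Bor w) (yp Bor w) ∧ Cand (insert ⟨yp Bor w, true⟩ (Sset Bor w)) (xp Bor w)

theorem good : ∀ w, GOOD Bor w := by
  intro w
  induction w using WellFoundedLT.induction with
  | ind w IH =>
  have memS : ∀ p ∈ Sset Bor w, ∃ v, v < w ∧
      (p = (⟨yp Bor v, true⟩ : Tg) ∨ p = (⟨xp Bor v, false⟩ : Tg)) := by
    rintro p ⟨v, hv, hp⟩; exact ⟨v, hv, hp⟩
  have h1 : ∀ p ∈ Sset Bor w, ptInv p.pt := by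
    intro p hp
    obtain ⟨v, hv, hp | hp⟩ := memS p hp
    · rw [hp]; exact (IH v hv).1.1
    · rw [hp]; exact (IH v hv).2.1
  -- pairwise finiteness for the points built before stage w
  have haux : ∀ u v : W, u < v → v < w → ∀ a b : Tg,
      (a = (⟨yp Bor u, true⟩ : Tg) ∨ a = (⟨xp Bor u, false⟩ : Tg)) →
      (b = (⟨yp Bor v, true⟩ : Tg) ∨ b = (⟨xp Bor v, false⟩ : Tg)) →
      (iS a.pt b.pt).Finite := by
    intro u v huv hvw a b ha hb
    have haS : a ∈ Sset Bor v := by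
      rcases ha with ha | ha <;> exact ⟨u, huv, by rw [ha]; simp⟩
    rcases hb with hb | hb
    · have := ((IH v hvw).1.2 a haS).1
      rw [hb, iS_comm]
      exact this
    · have := ((IH v hvw).2.2 a (Set.mem_insert_of_mem _ haS)).1
      rw [hb, iS_comm]
      exact this
  have hsame : ∀ v : W, v < w → ∀ a b : Tg, a ≠ b →
      (a = (⟨yp Bor v, true⟩ : Tg) ∨ a = (⟨xp Bor v, false⟩ : Tg)) →
      (b = (⟨yp Bor v, true⟩ : Tg) ∨ b = (⟨xp Bor v, false⟩ : Tg)) →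
      (iS a.pt b.pt).Finite := by
    intro v hvw a b hne ha hb
    have hxy := ((IH v hvw).2.2 ⟨yp Bor v, true⟩ (Set.mem_insert _ _)).1
    rcases ha with ha | ha <;> rcases hb with hb | hb
    · exact absurd (ha.trans hb.symm) hne
    · rw [ha, hb, iS_comm]; exact hxy
    · rw [ha, hb]; exact hxy
    · exact absurd (ha.trans hb.symm) hne
  have h2 : ∀ p ∈ Sset Bor w, ∀ r ∈ Sset Bor w, p ≠ r → (iS p.pt r.pt).Finite := by
    intro p hp r hr hne
    obtain ⟨v, hv, hpv⟩ := memS p hp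
    obtain ⟨u, hu, hru⟩ := memS r hr
    rcases lt_trichotomy v u with hvu | hvu | hvu
    · exact haux v u hvu hu p r hpv hru
    · subst hvu
      exact hsame v hv p r hne hpv hru
    · rw [iS_comm]
      exact haux u v hvu hv r p hru hpv
  obtain ⟨z0, hz0⟩ := cand_exists (Sset Bor w) (Sset_countable Bor w) h1 h2
  have hy : Cand (Sset Bor w) (yp Bor w) := by
    rw [yp_eq]
    split_ifs with hc1 hc2
    · exact hc1.choose_spec.1
    · exact hc2.choose_spec
    · exact absurd ⟨z0, hz0⟩ hc2
  -- now the x point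
  have h1' : ∀ p ∈ insert (⟨yp Bor w, true⟩ : Tg) (Sset Bor w), ptInv p.pt := by
    intro p hp
    rcases Set.mem_insert_iff.mp hp with hp | hp
    · rw [hp]; exact hy.1
    · exact h1 p hp
  have h2' : ∀ p ∈ insert (⟨yp Bor w, true⟩ : Tg) (Sset Bor w),
      ∀ r ∈ insert (⟨yp Bor w, true⟩ : Tg) (Sset Bor w), p ≠ r → (iS p.pt r.pt).Finite := by
    intro p hp r hr hne
    rcases Set.mem_insert_iff.mp hp with hp | hp <;>
      rcases Set.mem_insert_iff.mp hr with hr | hr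
    · exact absurd (hp.trans hr.symm) hne
    · rw [hp]; exact (hy.2 r hr).1
    · rw [hr, iS_comm]; exact (hy.2 p hp).1
    · exact h2 p hp r hr hne
  obtain ⟨z1, hz1⟩ := cand_exists _ ((Sset_countable Bor w).insert _) h1' h2'
  have hx : Cand (insert (⟨yp Bor w, true⟩ : Tg) (Sset Bor w)) (xp Bor w) := by
    rw [xp_eq]
    split_ifs with hc1
    · exact hc1.choose_spec
    · exact absurd ⟨z1, hz1⟩ hc1
  exact ⟨hy, hx⟩

lemma y_mem_Sset {v w : W} (h : v < w) : (⟨yp Bor v, true⟩ : Tg) ∈ Sset Bor w :=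
  ⟨v, h, Or.inl rfl⟩

lemma x_mem_Sset {v w : W} (h : v < w) : (⟨xp Bor v, false⟩ : Tg) ∈ Sset Bor w :=
  ⟨v, h, Or.inr rfl⟩

lemma parity_Y {v w : W} (h : v ≠ w) :
    (iS (yp Bor v) (yp Bor w)).Finite ∧ (iS (yp Bor v) (yp Bor w)).ncard % 2 = 0 := by
  rcases lt_or_gt_of_ne h with hlt | hlt
  · have hp := (good Bor w).1.2 _ (y_mem_Sset Bor hlt)
    rw [iS_comm]
    exact ⟨hp.1, by simpa [tgtPar] using hp.2⟩
  · have hp := (good Bor v).1.2 _ (y_mem_Sset Bor hlt)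
    exact ⟨hp.1, by simpa [tgtPar] using hp.2⟩

lemma parity_X {v w : W} (h : v ≠ w) :
    (iS (xp Bor v) (xp Bor w)).Finite ∧ (iS (xp Bor v) (xp Bor w)).ncard % 2 = 1 := by
  rcases lt_or_gt_of_ne h with hlt | hlt
  · have hp := (good Bor w).2.2 _ (Set.mem_insert_of_mem _ (x_mem_Sset Bor hlt))
    rw [iS_comm]
    exact ⟨hp.1, by simpa [tgtPar] using hp.2⟩
  · have hp := (good Bor v).2.2 _ (Set.mem_insert_of_mem _ (x_mem_Sset Bor hlt))
    exact ⟨hp.1, by simpa [tgtPar] using hp.2⟩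

lemma cross_fin (v u : W) : (iS (xp Bor v) (yp Bor u)).Finite := by
  rcases lt_trichotomy v u with h | h | h
  · have hp := (good Bor u).1.2 _ (x_mem_Sset Bor h)
    rw [iS_comm]
    exact hp.1
  · subst h
    exact ((good Bor v).2.2 _ (Set.mem_insert _ _)).1
  · exact ((good Bor v).2.2 _ (Set.mem_insert_of_mem _ (y_mem_Sset Bor h))).1

lemma ne_of_fin {a b : Pt} (ha : ptInv a) (hfin : (iS a b).Finite) : a ≠ b := by
  rintro rfl
  rw [iS_self] at hfin
  exact ha.1 hfin

lemma yp_inj : Function.Injective (yp Bor) := by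
  intro v w h
  by_contra hne
  exact (ne_of_fin (good Bor v).1.1 (parity_Y Bor hne).1) h

lemma xp_inj : Function.Injective (xp Bor) := by
  intro v w h
  by_contra hne
  exact (ne_of_fin (good Bor v).2.1 (parity_X Bor hne).1) h

lemma xp_ne_yp (v u : W) : xp Bor v ≠ yp Bor u :=
  ne_of_fin (good Bor v).2.1 (cross_fin Bor v u)

lemma concentration {B : Set Pt} (hYB : ∀ v, yp Bor v ∈ B) {w : W} (hw : Bor w = B) :
    ∀ v, ¬(v ≤ w) → xp Bor v ∈ B := by
  have hkeep : ∀ z, Cand (Sset Bor w) z → z ∈ Bor w := by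
    by_contra hc
    push_neg at hc
    obtain ⟨z, hz, hzB⟩ := hc
    have hex : ∃ z, Cand (Sset Bor w) z ∧ z ∉ Bor w := ⟨z, hz, hzB⟩
    have hyw : yp Bor w = hex.choose := by rw [yp_eq, dif_pos hex]
    have hnotin := hex.choose_spec.2
    rw [← hyw, hw] at hnotin
    exact hnotin (hYB w)
  intro v hv
  have hwv : w < v := lt_of_not_ge hv
  have hc : Cand (Sset Bor w) (xp Bor v) :=
    Cand.mono ((Sset_mono Bor (le_of_lt hwv)).trans (Set.subset_insert _ _)) (good Bor v).2
  rw [← hw]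
  exact hkeep _ hc

end Rec

theorem exists_Bor (hCH : Cardinal.continuum.{0} = Cardinal.aleph.{0} 1) :
    ∃ Bor : W → Set Pt, ∀ B : Set Pt, MeasurableSet[borel Pt] B → ∃ w, Bor w = B := by
  obtain ⟨b, hbc, -, hbasis⟩ := TopologicalSpace.exists_countable_basis Pt
  have hEq : borel Pt = MeasurableSpace.generateFrom b := hbasis.borel_eq_generateFrom
  have hcard : #{t : Set Pt | MeasurableSet[borel Pt] t} ≤ Cardinal.continuum := by
    rw [hEq]
    exact MeasurableSpace.cardinal_measurableSet_le_continuum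
      (hbc.le_aleph0.trans Cardinal.aleph0_le_continuum)
  have hW : #{t : Set Pt | MeasurableSet[borel Pt] t} ≤ #W := by
    rw [Cardinal.mk_ord_toType]
    exact hcard.trans hCH.le
  obtain ⟨f⟩ := Cardinal.le_def _ _ |>.mp hW
  classical
  refine ⟨fun w => if h : ∃ t : {t : Set Pt | MeasurableSet[borel Pt] t}, f t = w
    then (Classical.choose h).val else ∅, ?_⟩
  intro B hB
  refine ⟨f ⟨B, hB⟩, ?_⟩
  have hex : ∃ t : {t : Set Pt | MeasurableSet[borel Pt] t}, f t = f ⟨B, hB⟩ := ⟨_, rfl⟩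
  show (if h : ∃ t : {t : Set Pt | MeasurableSet[borel Pt] t}, f t = f ⟨B, hB⟩
    then (Classical.choose h).val else ∅) = B
  rw [dif_pos hex]
  have hch := f.injective (Classical.choose_spec hex)
  rw [hch]



end

end Stmt2

/-- (CH) There are uncountable disjoint sets `X, Y ⊆ 2^ω` such that `X` is Borel
concentrated on `Y`, `Y² \ Δ` is relatively `F_σ` in `X² ∪ Y²`, and `X² \ Δ` is
relatively `F_σ` in `X² ∪ Y²`. -/
theorem stmt2 (hCH : Cardinal.continuum = Cardinal.aleph 1) :
    ∃ X Y : Set (ℕ → Bool),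
      ¬ X.Countable ∧ ¬ Y.Countable ∧ Disjoint X Y ∧
      (∀ B : Set (ℕ → Bool), MeasurableSet[borel (ℕ → Bool)] B → Y ⊆ B →
        (X \ B).Countable) ∧
      (∃ F : Set ((ℕ → Bool) × (ℕ → Bool)), IsFsigma F ∧
        F ∩ (X ×ˢ X ∪ Y ×ˢ Y) = (Y ×ˢ Y) \ Set.diagonal (ℕ → Bool)) ∧
      (∃ H : Set ((ℕ → Bool) × (ℕ → Bool)), IsFsigma H ∧
        H ∩ (X ×ˢ X ∪ Y ×ˢ Y) = (X ×ˢ X) \ Set.diagonal (ℕ → Bool)) := by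
  have hCH0 : Cardinal.continuum.{0} = Cardinal.aleph.{0} 1 :=
    Cardinal.lift_eq_aleph_one.mp (Cardinal.lift_continuum.trans hCH)
  obtain ⟨Bor, hBor⟩ := Stmt2.exists_Bor hCH0
  refine ⟨Set.range (Stmt2.xp Bor), Set.range (Stmt2.yp Bor), ?_, ?_, ?_, ?_, ?_, ?_⟩
  · rw [Cardinal.countable_iff_lt_aleph_one,
      Cardinal.mk_range_eq _ (Stmt2.xp_inj Bor), Cardinal.mk_ord_toType]
    exact lt_irrefl _
  · rw [Cardinal.countable_iff_lt_aleph_one,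
      Cardinal.mk_range_eq _ (Stmt2.yp_inj Bor), Cardinal.mk_ord_toType]
    exact lt_irrefl _
  · refine Set.disjoint_left.mpr ?_
    rintro a ⟨v, rfl⟩ ⟨u, hu⟩
    exact Stmt2.xp_ne_yp Bor v u hu.symm
  · intro B hB hYB
    obtain ⟨w, hw⟩ := hBor B hB
    have hsub : Set.range (Stmt2.xp Bor) \ B ⊆ Stmt2.xp Bor '' Set.Iic w := by
      rintro a ⟨⟨v, rfl⟩, haB⟩
      by_cases hvw : v ≤ w
      · exact ⟨v, hvw, rfl⟩
      · exact absurd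
          (Stmt2.concentration Bor (fun u => hYB (Set.mem_range_self u)) hw v hvw) haB
    refine Set.Countable.mono hsub ?_
    refine Set.Countable.image ?_ _
    rw [← Set.Iio_union_right]
    exact (Stmt2.Iio_countable w).union (Set.countable_singleton w)
  · refine ⟨Stmt2.FH 0, Stmt2.isFsigma_FH 0, ?_⟩
    ext p
    obtain ⟨a, b⟩ := p
    simp only [Set.mem_inter_iff, Set.mem_union, Set.mem_prod, Set.mem_diff,
      Set.mem_range, Set.mem_diagonal_iff]
    constructor
    · rintro ⟨hF, hmem⟩
      obtain ⟨hne, hfin, hpar⟩ := Stmt2.mem_FH.mp hF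
      rcases hmem with ⟨⟨v, rfl⟩, ⟨u, rfl⟩⟩ | hY
      · exfalso
        have hvu : v ≠ u := fun h => hne (by rw [h])
        have h1 := (Stmt2.parity_X Bor hvu).2
        omega
      · exact ⟨hY, hne⟩
    · rintro ⟨⟨⟨v, rfl⟩, ⟨u, rfl⟩⟩, hne⟩
      have hne' : Stmt2.yp Bor v ≠ Stmt2.yp Bor u := hne
      have hvu : v ≠ u := fun h => hne' (by rw [h])
      have h1 := Stmt2.parity_Y Bor hvu
      exact ⟨Stmt2.mem_FH.mpr ⟨hne', h1.1, h1.2⟩, Or.inr ⟨⟨v, rfl⟩, ⟨u, rfl⟩⟩⟩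
  · refine ⟨Stmt2.FH 1, Stmt2.isFsigma_FH 1, ?_⟩
    ext p
    obtain ⟨a, b⟩ := p
    simp only [Set.mem_inter_iff, Set.mem_union, Set.mem_prod, Set.mem_diff,
      Set.mem_range, Set.mem_diagonal_iff]
    constructor
    · rintro ⟨hF, hmem⟩
      obtain ⟨hne, hfin, hpar⟩ := Stmt2.mem_FH.mp hF
      rcases hmem with hX | ⟨⟨v, rfl⟩, ⟨u, rfl⟩⟩
      · exact ⟨hX, hne⟩
      · exfalso
        have hvu : v ≠ u := fun h => hne (by rw [h])
        have h1 := (Stmt2.parity_Y Bor hvu).2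
        omega
    · rintro ⟨⟨⟨v, rfl⟩, ⟨u, rfl⟩⟩, hne⟩
      have hne' : Stmt2.xp Bor v ≠ Stmt2.xp Bor u := hne
      have hvu : v ≠ u := fun h => hne' (by rw [h])
      have h1 := Stmt2.parity_X Bor hvu
      exact ⟨Stmt2.mem_FH.mpr ⟨hne', h1.1, h1.2⟩, Or.inl ⟨⟨v, rfl⟩, ⟨u, rfl⟩⟩⟩
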